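/- Let R be a noetherian commutative ring and A an R-algebra, and let A° = {f ∈ A^* : f(I) = 0 for some R-cofinite two-sided ideal I of A}. (1) If the canonical map λ_A: A → Hom_R(A°,R), a ↦ (f ↦ f(a)), is injective (A is proper), then ⋂{I : I an R-cofinite two-sided ideal of A} = 0. (2) If A is cofinitely R-cogenerated (A/I is R-cogenerated for every R-cofinite two-sided ideal I), then the converse also holds: ⋂{I : I R-cofinite two-sided ideal} = 0 implies λ_A injective. (3) If R is a QF ring (noetherian and injective as an R-module), then λ_A is injective if and only if ⋂{I : I R-cofinite two-sided ideal} = 0, if and only if A° is dense in A^* with respect to the finite topology. -/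

import Mathlib

/-- `A° = {f ∈ A^* : f(I) = 0` for some two-sided ideal `I` of `A` with `A/I`
finitely generated as an `R`-module `}`. -/
def finiteDual (R : Type*) (A : Type*) [CommRing R] [Ring A] [Algebra R A] :
    Set (Module.Dual R A) :=
  {f | ∃ I : Ideal A, (∀ x ∈ I, ∀ a : A, x * a ∈ I) ∧
    Module.Finite R (A ⧸ I) ∧ ∀ x ∈ I, f x = 0}

/-- The finite topology on `A^* = Hom_R(A,R)`: the topology induced from the product
topology on `R^A`, where `R` carries the discrete topology. -/
def finiteTopology (R A : Type*) [CommRing R] [AddCommGroup A] [Module R A] :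
    TopologicalSpace (Module.Dual R A) :=
  TopologicalSpace.induced (fun f : Module.Dual R A => (f : A → R))
    (@Pi.topologicalSpace A (fun _ => R) (fun _ => ⊥))

/-- An `R`-algebra `A` is *proper* if the canonical map
`λ_A : A → Hom_R(A°,R)`, `a ↦ (f ↦ f(a))`, is injective. -/
def IsProperAlgebra (R A : Type*) [CommRing R] [Ring A] [Algebra R A] : Prop :=
  Function.Injective
    (fun (a : A) (f : finiteDual R A) => (f : Module.Dual R A) a)

/- ### Auxiliary lemmas -/

private lemma pi_map_eq_sum {R : Type*} [CommRing R] {ι : Type*} [Fintype ι] [DecidableEq ι]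
    (ψ : (ι → R) →ₗ[R] R) (v : ι → R) :
    ψ v = ∑ i, v i * ψ (Pi.single i 1) := by
  conv_lhs => rw [← Finset.univ_sum_single v]
  rw [map_sum]
  refine Finset.sum_congr rfl fun i _ => ?_
  have hv : (Pi.single i (v i) : ι → R) = v i • (Pi.single i 1 : ι → R) := by
    rw [← Pi.single_smul' i (v i) (1 : R), smul_eq_mul, mul_one]
  rw [hv, map_smul, smul_eq_mul]

/-- Over a noetherian self-injective commutative ring, every module is `R`-cogenerated. -/
private lemma exists_functional {R : Type*} [CommRing R] [IsNoetherianRing R]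
    (hB : Module.Baer R R) {M : Type*} [AddCommGroup M] [Module R M]
    (x : M) (hx : x ≠ 0) : ∃ φ : M →ₗ[R] R, φ x ≠ 0 := by
  classical
  set π : R →ₗ[R] M := LinearMap.toSpanSingleton R M x with hπdef
  set J : Ideal R := LinearMap.ker π with hJdef
  have h1J : (1 : R) ∉ J := by
    simp only [hJdef, LinearMap.mem_ker, hπdef, LinearMap.toSpanSingleton_apply, one_smul]
    exact hx
  obtain ⟨a, ha0, haJ⟩ : ∃ a : R, a ≠ 0 ∧ ∀ c ∈ J, c * a = 0 := by
    by_contra hcon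
    push_neg at hcon
    obtain ⟨s, hs⟩ := (IsNoetherian.noetherian J : J.FG)
    let F : R →ₗ[R] (↥s → R) := LinearMap.pi fun i => LinearMap.toSpanSingleton R R (i : R)
    have hF : Function.Injective F := by
      intro r r' hrr'
      rw [← sub_eq_zero]
      set d := r - r' with hd_def
      have hd : F d = 0 := by rw [map_sub, hrr', sub_self]
      by_contra hd0
      obtain ⟨c, hcJ, hc⟩ := hcon d hd0
      have hsker : J ≤ LinearMap.ker (LinearMap.toSpanSingleton R R d) := by
        rw [← hs, Submodule.span_le]
        intro y hy
        simp only [SetLike.mem_coe, LinearMap.mem_ker, LinearMap.toSpanSingleton_apply,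
          smul_eq_mul]
        have h := congrFun hd ⟨y, hy⟩
        simp only [F, LinearMap.pi_apply, LinearMap.toSpanSingleton_apply, smul_eq_mul,
          Pi.zero_apply] at h
        rw [mul_comm] at h
        exact h
      have hck := hsker hcJ
      rw [LinearMap.mem_ker, LinearMap.toSpanSingleton_apply, smul_eq_mul] at hck
      exact hc hck
    obtain ⟨h, hh⟩ := hB.extension_property F hF LinearMap.id
    have h1 : (1 : R) ∈ J := by
      have e1 : (1 : R) = h (F 1) := by
        have := LinearMap.congr_fun hh 1
        simpa using this.symm
      rw [e1, pi_map_eq_sum]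
      refine Submodule.sum_mem _ fun i _ => ?_
      have hFi : (F (1 : R)) i = (i : R) := by
        simp [F, LinearMap.pi_apply, LinearMap.toSpanSingleton_apply]
      rw [hFi]
      have hiJ : (i : R) ∈ J := by rw [← hs]; exact Submodule.subset_span i.2
      exact Ideal.mul_mem_right _ _ hiJ
    exact h1J h1
  have hJσ : J ≤ LinearMap.ker (LinearMap.toSpanSingleton R R a) := by
    intro c hc
    rw [LinearMap.mem_ker, LinearMap.toSpanSingleton_apply, smul_eq_mul]
    exact haJ c hc
  let π' : (R ⧸ J) →ₗ[R] M := J.liftQ π le_rfl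
  have hπ'inj : Function.Injective π' := by
    rw [← LinearMap.ker_eq_bot]
    exact Submodule.ker_liftQ_eq_bot _ _ _ le_rfl
  let σ' : (R ⧸ J) →ₗ[R] R := J.liftQ (LinearMap.toSpanSingleton R R a) hJσ
  obtain ⟨φ, hφ⟩ := hB.extension_property π' hπ'inj σ'
  refine ⟨φ, ?_⟩
  have hx1 : π' (Submodule.Quotient.mk (1 : R)) = x := by
    simp only [π', Submodule.liftQ_apply, hπdef, LinearMap.toSpanSingleton_apply, one_smul]
  have hσ1 : σ' (Submodule.Quotient.mk (1 : R)) = a := by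
    simp only [σ', Submodule.liftQ_apply, LinearMap.toSpanSingleton_apply, one_smul]
  have hc := LinearMap.congr_fun hφ (Submodule.Quotient.mk (1 : R))
  simp only [LinearMap.comp_apply] at hc
  rw [hx1] at hc
  rw [hc, hσ1]
  exact ha0

section Alg

variable (R : Type*) {A : Type*} [CommRing R] [Ring A] [Algebra R A]

/-- The quotient map `A → A/I` as an `R`-linear map. -/
private def mkRL (I : Ideal A) : A →ₗ[R] A ⧸ I where
  toFun := Submodule.Quotient.mk
  map_add' := fun _ _ => rfl
  map_smul' := fun _ _ => rfl

variable [IsNoetherianRing R]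

private lemma finite_inf {I I' : Ideal A} (h : Module.Finite R (A ⧸ I))
    (h' : Module.Finite R (A ⧸ I')) : Module.Finite R (A ⧸ (I ⊓ I')) := by
  haveI := h; haveI := h'
  set p : Submodule R A := Submodule.restrictScalars R (I ⊓ I') with hp
  let g : A →ₗ[R] (A ⧸ I) × (A ⧸ I') := LinearMap.prod (mkRL R I) (mkRL R I')
  have hle : p ≤ LinearMap.ker g := by
    intro x hxp
    have hx : x ∈ I ⊓ I' := hxp
    rw [LinearMap.mem_ker]
    have h1 : (Submodule.Quotient.mk x : A ⧸ I) = 0 :=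
      (Submodule.Quotient.mk_eq_zero I).mpr (Submodule.mem_inf.mp hx).1
    have h2 : (Submodule.Quotient.mk x : A ⧸ I') = 0 :=
      (Submodule.Quotient.mk_eq_zero I').mpr (Submodule.mem_inf.mp hx).2
    exact Prod.ext h1 h2
  have hker : LinearMap.ker g ≤ p := by
    intro x hxk
    rw [LinearMap.mem_ker] at hxk
    have h1 : (Submodule.Quotient.mk x : A ⧸ I) = 0 := congrArg Prod.fst hxk
    have h2 : (Submodule.Quotient.mk x : A ⧸ I') = 0 := congrArg Prod.snd hxk
    exact Submodule.mem_inf.mpr ⟨(Submodule.Quotient.mk_eq_zero I).mp h1,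
      (Submodule.Quotient.mk_eq_zero I').mp h2⟩
  let F := p.liftQ g hle
  have hFinj : Function.Injective F := by
    rw [← LinearMap.ker_eq_bot]
    exact Submodule.ker_liftQ_eq_bot _ _ _ hker
  haveI : IsNoetherian R ((A ⧸ I) × (A ⧸ I')) := inferInstance
  haveI := isNoetherian_of_injective F hFinj
  haveI : Module.Finite R (A ⧸ p) := Module.finite_def.mpr (IsNoetherian.noetherian ⊤)
  exact Module.Finite.equiv (Submodule.Quotient.restrictScalarsEquiv R (I ⊓ I'))

variable (A)

/-- `A°` as a submodule of the dual. -/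
private def finiteDualSubmodule : Submodule R (Module.Dual R A) where
  carrier := finiteDual R A
  zero_mem' := by
    refine ⟨⊤, fun x _ a => Submodule.mem_top, ?_, fun x _ => rfl⟩
    haveI : Subsingleton (A ⧸ (⊤ : Ideal A)) :=
      Submodule.Quotient.subsingleton_iff.mpr rfl
    infer_instance
  add_mem' := by
    rintro f g ⟨I, hI2, hIfin, hIf⟩ ⟨I', hI'2, hI'fin, hI'g⟩
    refine ⟨I ⊓ I', fun x hx b => Submodule.mem_inf.mpr
      ⟨hI2 x (Submodule.mem_inf.mp hx).1 b, hI'2 x (Submodule.mem_inf.mp hx).2 b⟩,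
      finite_inf R hIfin hI'fin, fun x hx => ?_⟩
    simp [hIf x (Submodule.mem_inf.mp hx).1, hI'g x (Submodule.mem_inf.mp hx).2]
  smul_mem' := by
    rintro r f ⟨I, hI2, hIfin, hIf⟩
    exact ⟨I, hI2, hIfin, fun x hx => by simp [hIf x hx]⟩

end Alg

/- ### Topology helpers -/

private lemma dense_of_finite_approx {R A : Type*} [CommRing R] [AddCommGroup A] [Module R A]
    (s : Set (Module.Dual R A))
    (h : ∀ (f : Module.Dual R A) (S : Finset A), ∃ g ∈ s, ∀ a ∈ S, g a = f a) :
    @Dense (Module.Dual R A) (finiteTopology R A) s := by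
  letI tR : TopologicalSpace R := ⊥
  letI tD : TopologicalSpace (Module.Dual R A) := finiteTopology R A
  rw [dense_iff_inter_open]
  rintro U hU ⟨f, hfU⟩
  obtain ⟨V, hV, rfl⟩ := isOpen_induced_iff.mp hU
  obtain ⟨S, u, hSu, hsub⟩ := isOpen_pi_iff.mp hV _ hfU
  obtain ⟨g, hgs, hgf⟩ := h f S
  refine ⟨g, ?_, hgs⟩
  apply hsub
  rw [Set.mem_pi]
  intro a ha
  have ha' : a ∈ S := ha
  show g a ∈ u a
  rw [hgf a ha']
  exact (hSu a ha').2

private lemma exists_point_of_dense {R A : Type*} [CommRing R] [AddCommGroup A] [Module R A]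
    (s : Set (Module.Dual R A)) (hd : @Dense (Module.Dual R A) (finiteTopology R A) s)
    (f : Module.Dual R A) (c : A) : ∃ g ∈ s, g c = f c := by
  letI tR : TopologicalSpace R := ⊥
  haveI : DiscreteTopology R := ⟨rfl⟩
  letI tD : TopologicalSpace (Module.Dual R A) := finiteTopology R A
  have hW : IsOpen ((fun v : A → R => v c) ⁻¹' {f c}) :=
    (continuous_apply c).isOpen_preimage _ (isOpen_discrete _)
  have hU : IsOpen ((fun g : Module.Dual R A => (g : A → R)) ⁻¹'
      ((fun v : A → R => v c) ⁻¹' {f c})) :=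
    continuous_induced_dom.isOpen_preimage _ hW
  obtain ⟨g, hgs, hgU⟩ := hd.exists_mem_open hU ⟨f, rfl⟩
  exact ⟨g, hgs, hgU⟩

theorem proper_iff_intersection_of_cofinite_ideals_eq_bot
    {R A : Type*} [CommRing R] [Nontrivial R] [IsNoetherianRing R]
    [Ring A] [Algebra R A] :
    -- (1) if `A` is proper, then the intersection of all `R`-cofinite two-sided ideals
    -- of `A` is zero
    (IsProperAlgebra R A →
      ∀ a : A, (∀ I : Ideal A, (∀ x ∈ I, ∀ b : A, x * b ∈ I) →
        Module.Finite R (A ⧸ I) → a ∈ I) → a = 0) ∧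
    -- (2) if `A` is cofinitely `R`-cogenerated, the converse holds
    ((∀ I : Ideal A, (∀ x ∈ I, ∀ b : A, x * b ∈ I) → Module.Finite R (A ⧸ I) →
        ∀ x : A ⧸ I, x ≠ 0 → ∃ φ : (A ⧸ I) →ₗ[R] R, φ x ≠ 0) →
      (∀ a : A, (∀ I : Ideal A, (∀ x ∈ I, ∀ b : A, x * b ∈ I) →
        Module.Finite R (A ⧸ I) → a ∈ I) → a = 0) →
      IsProperAlgebra R A) ∧
    -- (3) if `R` is a QF ring, then: proper ↔ the intersection is zero ↔ `A°` is dense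
    -- in `A^*` for the finite topology
    (Module.Injective R R →
      ((IsProperAlgebra R A ↔
        ∀ a : A, (∀ I : Ideal A, (∀ x ∈ I, ∀ b : A, x * b ∈ I) →
          Module.Finite R (A ⧸ I) → a ∈ I) → a = 0) ∧
       (IsProperAlgebra R A ↔
        @Dense (Module.Dual R A) (finiteTopology R A) (finiteDual R A)))) := by
  classical
  have part1 : IsProperAlgebra R A →
      ∀ a : A, (∀ I : Ideal A, (∀ x ∈ I, ∀ b : A, x * b ∈ I) →
        Module.Finite R (A ⧸ I) → a ∈ I) → a = 0 := by
    intro hP a ha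
    apply hP
    funext f
    obtain ⟨I, hI2, hIfin, hIf⟩ := f.2
    show (f : Module.Dual R A) a = (f : Module.Dual R A) 0
    rw [map_zero]
    exact hIf a (ha I hI2 hIfin)
  have part2 : (∀ I : Ideal A, (∀ x ∈ I, ∀ b : A, x * b ∈ I) → Module.Finite R (A ⧸ I) →
        ∀ x : A ⧸ I, x ≠ 0 → ∃ φ : (A ⧸ I) →ₗ[R] R, φ x ≠ 0) →
      (∀ a : A, (∀ I : Ideal A, (∀ x ∈ I, ∀ b : A, x * b ∈ I) →
        Module.Finite R (A ⧸ I) → a ∈ I) → a = 0) →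
      IsProperAlgebra R A := by
    intro hcog hint a b hab
    have hfab : ∀ f ∈ finiteDual R A, f a = f b := by
      intro f hf
      exact congrFun hab ⟨f, hf⟩
    rw [← sub_eq_zero]
    apply hint
    intro I hI2 hIfin
    by_contra hmem
    have hne : (Submodule.Quotient.mk (a - b) : A ⧸ I) ≠ 0 := by
      rw [Ne, Submodule.Quotient.mk_eq_zero]; exact hmem
    obtain ⟨φ, hφ⟩ := hcog I hI2 hIfin _ hne
    have hmem' : (φ ∘ₗ mkRL R I) ∈ finiteDual R A := by
      refine ⟨I, hI2, hIfin, fun x hx => ?_⟩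
      have hx0 : (Submodule.Quotient.mk x : A ⧸ I) = 0 :=
        (Submodule.Quotient.mk_eq_zero I).mpr hx
      show φ (Submodule.Quotient.mk x) = 0
      rw [hx0, map_zero]
    refine hφ ?_
    have h1 : (φ ∘ₗ mkRL R I) a = (φ ∘ₗ mkRL R I) b := hfab _ hmem'
    simp only [LinearMap.comp_apply, mkRL, LinearMap.coe_mk, AddHom.coe_mk] at h1
    change φ (Submodule.Quotient.mk a) = φ (Submodule.Quotient.mk b) at h1
    rw [show (Submodule.Quotient.mk (a - b) : A ⧸ I) =
      Submodule.Quotient.mk a - Submodule.Quotient.mk b from Submodule.Quotient.mk_sub I,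
      map_sub, h1, sub_self]
  refine ⟨part1, part2, ?_⟩
  intro hinjR
  have hB : Module.Baer R R := Module.Baer.of_injective hinjR
  have hcogQ : ∀ I : Ideal A, (∀ x ∈ I, ∀ b : A, x * b ∈ I) → Module.Finite R (A ⧸ I) →
      ∀ x : A ⧸ I, x ≠ 0 → ∃ φ : (A ⧸ I) →ₗ[R] R, φ x ≠ 0 :=
    fun I _ _ x hx => exists_functional hB x hx
  have key : IsProperAlgebra R A →
      ∀ (f : Module.Dual R A) (S : Finset A), ∃ g ∈ finiteDual R A, ∀ a ∈ S, g a = f a := by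
    intro hP f S
    let ev : Module.Dual R A →ₗ[R] (↥S → R) := LinearMap.pi fun i =>
      { toFun := fun g => g (i : A)
        map_add' := fun _ _ => rfl
        map_smul' := fun _ _ => rfl }
    let D : Submodule R (↥S → R) := Submodule.map ev (finiteDualSubmodule R A)
    by_cases ht : (fun i : ↥S => f (i : A)) ∈ D
    · obtain ⟨g, hg, hgev⟩ := ht
      refine ⟨g, hg, fun a ha => ?_⟩
      have := congrFun hgev (⟨a, ha⟩ : ↥S)
      simpa [ev, LinearMap.pi_apply] using this
    · exfalso
      have hne : (Submodule.Quotient.mk (fun i : ↥S => f (i : A)) : (↥S → R) ⧸ D) ≠ 0 := by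
        rw [Ne, Submodule.Quotient.mk_eq_zero]; exact ht
      obtain ⟨φ, hφ⟩ := exists_functional hB _ hne
      set ψ : (↥S → R) →ₗ[R] R := φ ∘ₗ D.mkQ with hψdef
      have hψD : ∀ v ∈ D, ψ v = 0 := by
        intro v hv
        have hv0 : (Submodule.Quotient.mk v : (↥S → R) ⧸ D) = 0 :=
          (Submodule.Quotient.mk_eq_zero D).mpr hv
        simp [hψdef, LinearMap.comp_apply, Submodule.mkQ_apply, hv0]
      have hψt : ψ (fun i : ↥S => f (i : A)) ≠ 0 := hφ
      set b : A := ∑ i : ↥S, ψ (Pi.single i 1) • (i : A) with hbdef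
      have hb0 : b = 0 := by
        apply hP
        funext g
        show (g : Module.Dual R A) b = (g : Module.Dual R A) 0
        rw [map_zero]
        have hevD : ev (g : Module.Dual R A) ∈ D := ⟨(g : Module.Dual R A), g.2, rfl⟩
        have h0 := hψD _ hevD
        rw [pi_map_eq_sum] at h0
        have hgb : (g : Module.Dual R A) b =
            ∑ i : ↥S, (ev (g : Module.Dual R A)) i * ψ (Pi.single i 1) := by
          rw [hbdef, map_sum]
          refine Finset.sum_congr rfl fun i _ => ?_
          rw [map_smul, smul_eq_mul, mul_comm]
          rfl
        rw [hgb, h0]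
      apply hψt
      rw [pi_map_eq_sum]
      have : ∑ i : ↥S, f (i : A) * ψ (Pi.single i 1) = f b := by
        rw [hbdef, map_sum]
        refine Finset.sum_congr rfl fun i _ => ?_
        rw [map_smul, smul_eq_mul, mul_comm]
      rw [this, hb0, map_zero]
  constructor
  · exact ⟨part1, fun hint => part2 hcogQ hint⟩
  constructor
  · intro hP
    exact dense_of_finite_approx _ (key hP)
  · intro hdense a b hab
    rw [← sub_eq_zero]
    by_contra hne
    obtain ⟨f, hf⟩ := exists_functional hB (a - b) hne
    obtain ⟨g, hgmem, hgc⟩ := exists_point_of_dense _ hdense f (a - b)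
    have hgab : g a = g b := congrFun hab ⟨g, hgmem⟩
    have : g (a - b) = 0 := by rw [map_sub, hgab, sub_self]
    rw [hgc] at this
    exact hf this
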